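/- Let P be a finite set of points in the Euclidean plane ℝ², let T be a minimum spanning tree of P whose edge lengths are pairwise distinct, let s ∈ ℝ² \ P, and let a, b, c be three distinct points of P. For each pair {x, y} ⊆ {a, b, c}, let e_{xy} be the unique edge of maximum length on the unique path in T from x to y. Then the graph on vertex set P ∪ {s} whose edge set is (E(T) \ {e_{ab}, e_{bc}, e_{ac}}) together with the three edges {s,a}, {s,b}, {s,c} is a spanning tree of P ∪ {s}. -/

import Mathlib

open scoped BigOperators

noncomputable section

/-- The Euclidean plane. -/
abbrev Pt : Type := EuclideanSpace ℝ (Fin 2)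

/-- The length of an edge (an unordered pair of points): the Euclidean
distance between its endpoints. -/
def edgeLen : Sym2 Pt → ℝ :=
  Sym2.lift ⟨fun a b => dist a b, fun a b => dist_comm a b⟩

/-- The total length of a graph on the plane: the sum of the Euclidean
lengths of its edges. -/
def glength (G : SimpleGraph Pt) : ℝ := ∑ᶠ e ∈ G.edgeSet, edgeLen e

/-- `G` is a spanning tree of the point set `V`: all its edges join points of
`V`, it is acyclic, and all points of `V` are pairwise connected in `G`. -/
def IsSpanningTreeOn (V : Set Pt) (G : SimpleGraph Pt) : Prop :=
  (∀ ⦃x y : Pt⦄, G.Adj x y → x ∈ V ∧ y ∈ V) ∧ G.IsAcyclic ∧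
    ∀ x ∈ V, ∀ y ∈ V, G.Reachable x y

/-- `G` is a minimum spanning tree of the point set `V`. -/
def IsMSTOn (V : Set Pt) (G : SimpleGraph Pt) : Prop :=
  IsSpanningTreeOn V G ∧
    ∀ H : SimpleGraph Pt, IsSpanningTreeOn V H → glength G ≤ glength H

/-- The edges of `T` have pairwise distinct lengths. -/
def DistinctEdgeLengths (T : SimpleGraph Pt) : Prop :=
  ∀ e ∈ T.edgeSet, ∀ f ∈ T.edgeSet, edgeLen e = edgeLen f → e = f

/-- `e` is the (unique) edge of maximum length on the (unique) path in `T`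
from `x` to `y`: it is an edge of `T` lying on every path from `x` to `y`,
and on every such path its length is maximal. -/
def BottleneckEdge (T : SimpleGraph Pt) (x y : Pt) (e : Sym2 Pt) : Prop :=
  e ∈ T.edgeSet ∧
    ∀ p : T.Walk x y, p.IsPath → e ∈ p.edges ∧ ∀ f ∈ p.edges, edgeLen f ≤ edgeLen e

section Helpers

open SimpleGraph

local instance : DecidableEq Pt := Classical.decEq _

variable {T : SimpleGraph Pt} {V : Set Pt}

lemma exists_isPath {x y : Pt} (h : T.Reachable x y) : ∃ p : T.Walk x y, p.IsPath :=
  h.elim fun w => ⟨w.bypass, w.bypass_isPath⟩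

lemma path_unique (hacyc : T.IsAcyclic) {x y : Pt} {p q : T.Walk x y}
    (hp : p.IsPath) (hq : q.IsPath) : p = q := by
  have := (SimpleGraph.isAcyclic_iff_path_unique.mp hacyc) ⟨p, hp⟩ ⟨q, hq⟩
  exact congrArg Subtype.val this

lemma BottleneckEdge.symm2 {x y : Pt} {e : Sym2 Pt} (h : BottleneckEdge T x y e) :
    BottleneckEdge T y x e := by
  refine ⟨h.1, fun p hp => ?_⟩
  obtain ⟨h1, h2⟩ := h.2 p.reverse hp.reverse
  rw [SimpleGraph.Walk.edges_reverse, List.mem_reverse] at h1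
  refine ⟨h1, fun f hf => h2 f ?_⟩
  rw [SimpleGraph.Walk.edges_reverse, List.mem_reverse]; exact hf

/-- `x` and `y` are joined by a walk avoiding the edge `f`. -/
def Avoid (T : SimpleGraph Pt) (f : Sym2 Pt) (x y : Pt) : Prop :=
  ∃ p : T.Walk x y, f ∉ p.edges

lemma Avoid.symm {f : Sym2 Pt} {x y : Pt} (h : Avoid T f x y) : Avoid T f y x := by
  obtain ⟨p, hp⟩ := h
  exact ⟨p.reverse, by rwa [SimpleGraph.Walk.edges_reverse, List.mem_reverse]⟩

lemma Avoid.trans {f : Sym2 Pt} {x y z : Pt} (h : Avoid T f x y) (h' : Avoid T f y z) :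
    Avoid T f x z := by
  obtain ⟨p, hp⟩ := h; obtain ⟨q, hq⟩ := h'
  exact ⟨p.append q, by simp [SimpleGraph.Walk.edges_append, hp, hq]⟩

lemma not_avoid_of_mem_path (hacyc : T.IsAcyclic) {f : Sym2 Pt} {x y : Pt}
    {p : T.Walk x y} (hp : p.IsPath) (hf : f ∈ p.edges) : ¬ Avoid T f x y := by
  rintro ⟨w, hw⟩
  have hb : w.bypass = p := path_unique hacyc w.bypass_isPath hp
  exact hw (w.edges_bypass_subset (hb ▸ hf))

lemma end_mem_takeUntil {x u w : Pt} {p : T.Walk x u} (hp : p.IsPath)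
    (hw : w ∈ p.support) (h : u ∈ (p.takeUntil w hw).support) : w = u := by
  have hnd : p.support.Nodup := hp.support_nodup
  rw [← p.take_spec hw, SimpleGraph.Walk.support_append] at hnd
  by_contra hne
  have hu2 : u ∈ (p.dropUntil w hw).support.tail := by
    have h2 := (p.dropUntil w hw).end_mem_support
    rw [SimpleGraph.Walk.support_eq_cons] at h2
    rcases List.mem_cons.mp h2 with h' | h'
    · exact absurd h'.symm hne
    · exact h'
  exact (List.nodup_append'.mp hnd).2.2 h hu2

lemma takeUntil_avoid {x u v : Pt} {p : T.Walk x u} (hp : p.IsPath)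
    (hf : s(u, v) ∈ p.edges) :
    ∃ q : T.Walk x v, q.IsPath ∧ s(u, v) ∉ q.edges ∧ ∀ f ∈ q.edges, f ∈ p.edges := by
  have hv : v ∈ p.support := p.snd_mem_support_of_mem_edges hf
  refine ⟨p.takeUntil v hv, hp.takeUntil hv, ?_, fun f hf' => p.edges_takeUntil_subset hv hf'⟩
  intro hmem
  have hu : u ∈ (p.takeUntil v hv).support :=
    SimpleGraph.Walk.fst_mem_support_of_mem_edges _ hmem
  have hvu : v = u := end_mem_takeUntil hp hv hu
  have hadj : T.Adj u v := (SimpleGraph.mem_edgeSet (G := T)).mp (p.edges_subset_edgeSet hf)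
  exact hadj.ne hvu.symm

lemma avoid_total (hedge : ∀ ⦃u v : Pt⦄, T.Adj u v → u ∈ V ∧ v ∈ V)
    (hconn : ∀ u ∈ V, ∀ v ∈ V, T.Reachable u v)
    {u v : Pt} (huv : T.Adj u v) {x : Pt} (hx : x ∈ V) :
    Avoid T s(u, v) x u ∨ Avoid T s(u, v) x v := by
  obtain ⟨p, hp⟩ := exists_isPath (hconn x hx u (hedge huv).1)
  by_cases hf : s(u, v) ∈ p.edges
  · obtain ⟨q, _, hq, _⟩ := takeUntil_avoid hp hf
    exact Or.inr ⟨q, hq⟩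
  · exact Or.inl ⟨p, hf⟩

lemma side_glue (hacyc : T.IsAcyclic)
    (hedge : ∀ ⦃u v : Pt⦄, T.Adj u v → u ∈ V ∧ v ∈ V)
    (hconn : ∀ u ∈ V, ∀ v ∈ V, T.Reachable u v)
    {u v : Pt} (huv : T.Adj u v)
    {x y z : Pt} (hx : x ∈ V) (hy : y ∈ V) (hz : z ∈ V)
    (hxy : ¬ Avoid T s(u, v) x y) (hxz : ¬ Avoid T s(u, v) x z) :
    Avoid T s(u, v) y z := by
  have hnot : ¬ Avoid T s(u, v) u v := by
    intro h
    have hp : (SimpleGraph.Walk.cons huv .nil).IsPath := by simp [huv.ne]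
    exact not_avoid_of_mem_path hacyc hp (by simp) h
  rcases avoid_total hedge hconn huv hx with hxu | hxv
  · have hyv : Avoid T s(u, v) y v := by
      rcases avoid_total hedge hconn huv hy with h | h
      · exact absurd (hxu.trans h.symm) hxy
      · exact h
    have hzv : Avoid T s(u, v) z v := by
      rcases avoid_total hedge hconn huv hz with h | h
      · exact absurd (hxu.trans h.symm) hxz
      · exact h
    exact hyv.trans hzv.symm
  · have hyu : Avoid T s(u, v) y u := by
      rcases avoid_total hedge hconn huv hy with h | h
      · exact h
      · exact absurd (hxv.trans h.symm) hxy
    have hzu : Avoid T s(u, v) z u := by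
      rcases avoid_total hedge hconn huv hz with h | h
      · exact h
      · exact absurd (hxv.trans h.symm) hxz
    exact hyu.trans hzu.symm

end Helpers

section Main

open SimpleGraph

variable {T : SimpleGraph Pt} {V : Set Pt}

lemma sym2_rep (e : Sym2 Pt) : ∃ u v : Pt, e = s(u, v) := by
  induction e using Sym2.ind with
  | _ u v => exact ⟨u, v, rfl⟩

lemma main_c1 (hedge : ∀ ⦃u v : Pt⦄, T.Adj u v → u ∈ V ∧ v ∈ V)
    (hacyc : T.IsAcyclic)
    (hconn : ∀ u ∈ V, ∀ v ∈ V, T.Reachable u v)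
    (hdist : DistinctEdgeLengths T)
    {x y z : Pt} (hx : x ∈ V) (hy : y ∈ V) (hz : z ∈ V)
    {e1 e2 : Sym2 Pt}
    (h1 : BottleneckEdge T x y e1) (h1' : BottleneckEdge T x z e1)
    (h2 : BottleneckEdge T y z e2) :
    ∀ u v : Pt, (s(u, v) = e1 ∨ s(u, v) = e2) →
      ∃ t, (t = x ∨ t = y ∨ t = z) ∧ ∃ p : T.Walk u t, e1 ∉ p.edges ∧ e2 ∉ p.edges := by
  classical
  obtain ⟨pxy, hpxy⟩ := exists_isPath (hconn x hx y hy)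
  obtain ⟨pxz, hpxz⟩ := exists_isPath (hconn x hx z hz)
  obtain ⟨pyz, hpyz⟩ := exists_isPath (hconn y hy z hz)
  have hxy1 : e1 ∈ pxy.edges := (h1.2 pxy hpxy).1
  have hxz1 : e1 ∈ pxz.edges := (h1'.2 pxz hpxz).1
  have hyz2 : e2 ∈ pyz.edges := (h2.2 pyz hpyz).1
  -- a general helper deriving a contradiction when e2 lies on both pxy and pxz
  have glue2 : e2 ∈ pxy.edges → e2 ∈ pxz.edges → False := by
    intro hA hB
    obtain ⟨u2, v2, he2⟩ := sym2_rep e2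
    have hadj2 : T.Adj u2 v2 := (SimpleGraph.mem_edgeSet (G := T)).mp (he2 ▸ h2.1)
    rw [he2] at hA hB hyz2
    exact not_avoid_of_mem_path hacyc hpyz hyz2
      (side_glue hacyc hedge hconn hadj2 hx hy hz
        (not_avoid_of_mem_path hacyc hpxy hA) (not_avoid_of_mem_path hacyc hpxz hB))
  have hsplit : e2 ∈ pxy.edges ∨ e2 ∈ pxz.edges := by
    have hb := (pxy.reverse.append pxz).bypass_isPath
    have hm := (h2.2 _ hb).1
    have hm2 := SimpleGraph.Walk.edges_bypass_subset _ hm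
    rw [SimpleGraph.Walk.edges_append, SimpleGraph.Walk.edges_reverse] at hm2
    rcases List.mem_append.mp hm2 with h | h
    · exact Or.inl (List.mem_reverse.mp h)
    · exact Or.inr h
  have hle : edgeLen e2 ≤ edgeLen e1 := by
    rcases hsplit with h | h
    · exact (h1.2 pxy hpxy).2 e2 h
    · exact (h1'.2 pxz hpxz).2 e2 h
  have hne12 : e1 ≠ e2 := by
    rintro rfl
    obtain ⟨u0, v0, he0⟩ := sym2_rep e1
    have hadj : T.Adj u0 v0 := (SimpleGraph.mem_edgeSet (G := T)).mp (he0 ▸ h1.1)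
    rw [he0] at hxy1 hxz1 hyz2
    exact not_avoid_of_mem_path hacyc hpyz hyz2
      (side_glue hacyc hedge hconn hadj hx hy hz
        (not_avoid_of_mem_path hacyc hpxy hxy1) (not_avoid_of_mem_path hacyc hpxz hxz1))
  have he1pyz : e1 ∉ pyz.edges := fun h =>
    hne12 (hdist e1 h1.1 e2 h2.1 (le_antisymm ((h2.2 pyz hpyz).2 e1 h) hle))
  intro u v huv
  rcases huv with he | he
  · -- the edge in question is e1
    subst he
    have hadj : T.Adj u v := (SimpleGraph.mem_edgeSet (G := T)).mp h1.1
    have hu_xy : u ∈ pxy.support := SimpleGraph.Walk.fst_mem_support_of_mem_edges _ hxy1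
    have hu_xz : u ∈ pxz.support := SimpleGraph.Walk.fst_mem_support_of_mem_edges _ hxz1
    have hnxy : ¬ Avoid T s(u, v) x y := not_avoid_of_mem_path hacyc hpxy hxy1
    have hnxz : ¬ Avoid T s(u, v) x z := not_avoid_of_mem_path hacyc hpxz hxz1
    rcases avoid_total hedge hconn hadj hx with hxu | hxv
    · -- x is on u's side
      have hqp : (pxy.takeUntil u hu_xy).IsPath := hpxy.takeUntil hu_xy
      have hq1 : s(u, v) ∉ (pxy.takeUntil u hu_xy).edges := fun h =>
        not_avoid_of_mem_path hacyc hqp h hxu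
      by_cases hq2 : e2 ∈ (pxy.takeUntil u hu_xy).edges
      · exfalso
        have h2xy : e2 ∈ pxy.edges := pxy.edges_takeUntil_subset hu_xy hq2
        have hq' : pxz.takeUntil u hu_xz = pxy.takeUntil u hu_xy :=
          path_unique hacyc (hpxz.takeUntil hu_xz) hqp
        have h2xz : e2 ∈ pxz.edges := pxz.edges_takeUntil_subset hu_xz (hq' ▸ hq2)
        exact glue2 h2xy h2xz
      · refine ⟨x, Or.inl rfl, (pxy.takeUntil u hu_xy).reverse, ?_, ?_⟩
        · rwa [SimpleGraph.Walk.edges_reverse, List.mem_reverse]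
        · rwa [SimpleGraph.Walk.edges_reverse, List.mem_reverse]
    · -- x is on v's side, hence y and z are on u's side
      have hyu : Avoid T s(u, v) y u := by
        rcases avoid_total hedge hconn hadj hy with h | h
        · exact h
        · exact absurd (hxv.trans h.symm) hnxy
      have hzu : Avoid T s(u, v) z u := by
        rcases avoid_total hedge hconn hadj hz with h | h
        · exact h
        · exact absurd (hxv.trans h.symm) hnxz
      have hu_yx : u ∈ pxy.reverse.support := by
        rw [SimpleGraph.Walk.support_reverse]; exact List.mem_reverse.mpr hu_xy
      have hu_zx : u ∈ pxz.reverse.support := by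
        rw [SimpleGraph.Walk.support_reverse]; exact List.mem_reverse.mpr hu_xz
      have hrp : (pxy.reverse.takeUntil u hu_yx).IsPath := hpxy.reverse.takeUntil hu_yx
      have hr1 : s(u, v) ∉ (pxy.reverse.takeUntil u hu_yx).edges := fun h =>
        not_avoid_of_mem_path hacyc hrp h hyu
      by_cases hr2 : e2 ∈ (pxy.reverse.takeUntil u hu_yx).edges
      · have h2xy : e2 ∈ pxy.edges := by
          have := pxy.reverse.edges_takeUntil_subset hu_yx hr2
          rwa [SimpleGraph.Walk.edges_reverse, List.mem_reverse] at this
        have hr'p : (pxz.reverse.takeUntil u hu_zx).IsPath := hpxz.reverse.takeUntil hu_zx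
        have hr'1 : s(u, v) ∉ (pxz.reverse.takeUntil u hu_zx).edges := fun h =>
          not_avoid_of_mem_path hacyc hr'p h hzu
        by_cases hr'2 : e2 ∈ (pxz.reverse.takeUntil u hu_zx).edges
        · exfalso
          have h2xz : e2 ∈ pxz.edges := by
            have := pxz.reverse.edges_takeUntil_subset hu_zx hr'2
            rwa [SimpleGraph.Walk.edges_reverse, List.mem_reverse] at this
          exact glue2 h2xy h2xz
        · refine ⟨z, Or.inr (Or.inr rfl), (pxz.reverse.takeUntil u hu_zx).reverse, ?_, ?_⟩
          · rwa [SimpleGraph.Walk.edges_reverse, List.mem_reverse]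
          · rwa [SimpleGraph.Walk.edges_reverse, List.mem_reverse]
      · refine ⟨y, Or.inr (Or.inl rfl), (pxy.reverse.takeUntil u hu_yx).reverse, ?_, ?_⟩
        · rwa [SimpleGraph.Walk.edges_reverse, List.mem_reverse]
        · rwa [SimpleGraph.Walk.edges_reverse, List.mem_reverse]
  · -- the edge in question is e2
    subst he
    have hu_yz : u ∈ pyz.support := SimpleGraph.Walk.fst_mem_support_of_mem_edges _ hyz2
    have hu_zy : u ∈ pyz.reverse.support := by
      rw [SimpleGraph.Walk.support_reverse]; exact List.mem_reverse.mpr hu_yz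
    have hq1 : e1 ∉ (pyz.takeUntil u hu_yz).edges := fun h =>
      he1pyz (pyz.edges_takeUntil_subset hu_yz h)
    by_cases hq2 : s(u, v) ∈ (pyz.takeUntil u hu_yz).edges
    · have hr1 : e1 ∉ (pyz.reverse.takeUntil u hu_zy).edges := fun h => by
        have := pyz.reverse.edges_takeUntil_subset hu_zy h
        rw [SimpleGraph.Walk.edges_reverse, List.mem_reverse] at this
        exact he1pyz this
      by_cases hr2 : s(u, v) ∈ (pyz.reverse.takeUntil u hu_zy).edges
      · exfalso
        have hdp : (pyz.dropUntil u hu_yz).reverse = pyz.reverse.takeUntil u hu_zy :=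
          path_unique hacyc (hpyz.dropUntil hu_yz).reverse (hpyz.reverse.takeUntil hu_zy)
        have h2drop : s(u, v) ∈ (pyz.dropUntil u hu_yz).edges := by
          rw [← hdp, SimpleGraph.Walk.edges_reverse, List.mem_reverse] at hr2
          exact hr2
        have hnodup : pyz.edges.Nodup := hpyz.isTrail.edges_nodup
        rw [← pyz.take_spec hu_yz, SimpleGraph.Walk.edges_append] at hnodup
        exact (List.nodup_append'.mp hnodup).2.2 hq2 h2drop
      · refine ⟨z, Or.inr (Or.inr rfl), (pyz.reverse.takeUntil u hu_zy).reverse, ?_, ?_⟩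
        · rwa [SimpleGraph.Walk.edges_reverse, List.mem_reverse]
        · rwa [SimpleGraph.Walk.edges_reverse, List.mem_reverse]
    · refine ⟨y, Or.inr (Or.inl rfl), (pyz.takeUntil u hu_yz).reverse, ?_, ?_⟩
      · rwa [SimpleGraph.Walk.edges_reverse, List.mem_reverse]
      · rwa [SimpleGraph.Walk.edges_reverse, List.mem_reverse]

end Main

section Main2

open SimpleGraph

variable {T : SimpleGraph Pt} {V : Set Pt}

lemma apex (hconn : ∀ u ∈ V, ∀ v ∈ V, T.Reachable u v)
    (hdist : DistinctEdgeLengths T)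
    {a b c : Pt} (ha : a ∈ V) (hb : b ∈ V) (hc : c ∈ V)
    {eab ebc eac : Sym2 Pt}
    (heab : BottleneckEdge T a b eab) (hebc : BottleneckEdge T b c ebc)
    (heac : BottleneckEdge T a c eac)
    (hle1 : edgeLen eac ≤ edgeLen eab) (hle2 : edgeLen ebc ≤ edgeLen eab) :
    eab = eac ∨ eab = ebc := by
  classical
  obtain ⟨pac, hpac⟩ := exists_isPath (hconn a ha c hc)
  obtain ⟨pcb, hpcb⟩ := exists_isPath (hconn c hc b hb)
  have hb' := (pac.append pcb).bypass_isPath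
  have hm := (heab.2 _ hb').1
  have hm2 := SimpleGraph.Walk.edges_bypass_subset _ hm
  rw [SimpleGraph.Walk.edges_append] at hm2
  rcases List.mem_append.mp hm2 with h | h
  · exact Or.inl (hdist eab heab.1 eac heac.1 (le_antisymm ((heac.2 pac hpac).2 eab h) hle1))
  · exact Or.inr (hdist eab heab.1 ebc hebc.1 (le_antisymm ((hebc.symm2.2 pcb hpcb).2 eab h) hle2))

lemma conn_helper
    (hedge : ∀ ⦃u v : Pt⦄, T.Adj u v → u ∈ V ∧ v ∈ V)
    (hacyc : T.IsAcyclic)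
    (hconn : ∀ u ∈ V, ∀ v ∈ V, T.Reachable u v)
    (hdist : DistinctEdgeLengths T)
    {s : Pt} (hs : s ∉ V)
    {x y z : Pt} (hx : x ∈ V) (hy : y ∈ V) (hz : z ∈ V)
    {f1 f2 : Sym2 Pt}
    (h1 : BottleneckEdge T x y f1) (h1' : BottleneckEdge T x z f1)
    (h2 : BottleneckEdge T y z f2)
    {K : Set (Sym2 Pt)} (hK : K = {f1, f2})
    {Es : Set (Sym2 Pt)} (hEx : s(s, x) ∈ Es) (hEy : s(s, y) ∈ Es) (hEz : s(s, z) ∈ Es) :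
    ∀ w ∈ V, (SimpleGraph.fromEdgeSet ((T.edgeSet \ K) ∪ Es)).Reachable w s := by
  classical
  set G := SimpleGraph.fromEdgeSet ((T.edgeSet \ K) ∪ Es) with hG
  have hGs : ∀ t : Pt, t ∈ V → s(s, t) ∈ Es → G.Reachable t s := by
    intro t ht hEt
    have : G.Adj s t := by
      rw [hG, SimpleGraph.fromEdgeSet_adj]
      exact ⟨Or.inr hEt, fun h => hs (h ▸ ht)⟩
    exact this.symm.reachable
  have hxs : G.Reachable x s := hGs x hx hEx
  have hys : G.Reachable y s := hGs y hy hEy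
  have hzs : G.Reachable z s := hGs z hz hEz
  intro w hw
  by_contra hwS
  obtain ⟨wk⟩ := hconn x hx w hw
  obtain ⟨d, _, hdS, hdS'⟩ :=
    wk.exists_boundary_dart {t : Pt | G.Reachable t s} hxs hwS
  have hdadj : T.Adj d.fst d.snd := d.adj
  apply hdS'
  by_cases hdK : s(d.fst, d.snd) ∈ K
  · have hor : s(d.snd, d.fst) = f1 ∨ s(d.snd, d.fst) = f2 := by
      rw [Sym2.eq_swap]
      rw [hK] at hdK
      simpa using hdK
    obtain ⟨t, ht, p, hp1, hp2⟩ := main_c1 hedge hacyc hconn hdist hx hy hz h1 h1' h2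
      d.snd d.fst hor
    have hts : G.Reachable t s := by
      rcases ht with rfl | rfl | rfl
      exacts [hxs, hys, hzs]
    have hpe : ∀ f ∈ p.edges, f ∈ G.edgeSet := by
      intro f hf
      rw [hG, SimpleGraph.edgeSet_fromEdgeSet]
      refine ⟨Or.inl ⟨p.edges_subset_edgeSet hf, ?_⟩, ?_⟩
      · rw [hK]
        rintro (rfl | rfl)
        · exact hp1 hf
        · exact hp2 (by simpa using hf)
      · exact SimpleGraph.not_isDiag_of_mem_edgeSet T (p.edges_subset_edgeSet hf)
    exact Reachable.trans ⟨(p.transfer G hpe)⟩ hts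
  · have : G.Adj d.fst d.snd := by
      rw [hG, SimpleGraph.fromEdgeSet_adj]
      exact ⟨Or.inl ⟨(SimpleGraph.mem_edgeSet (G := T)).mpr hdadj, hdK⟩, hdadj.ne⟩
    exact this.symm.reachable.trans hdS

end Main2

theorem stmt6 (P : Finset Pt) (T : SimpleGraph Pt) (hT : IsMSTOn ↑P T)
    (hdist : DistinctEdgeLengths T)
    (s : Pt) (hs : s ∉ P)
    (a b c : Pt) (ha : a ∈ P) (hb : b ∈ P) (hc : c ∈ P)
    (hab : a ≠ b) (hbc : b ≠ c) (hac : a ≠ c)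
    (eab ebc eac : Sym2 Pt)
    (heab : BottleneckEdge T a b eab) (hebc : BottleneckEdge T b c ebc)
    (heac : BottleneckEdge T a c eac) :
    IsSpanningTreeOn (insert s ↑P)
      (SimpleGraph.fromEdgeSet
        ((T.edgeSet \ {eab, ebc, eac}) ∪ {s(s, a), s(s, b), s(s, c)})) := by
  classical
  obtain ⟨⟨hedge, hacyc, hconn⟩, -⟩ := hT
  have ha' : a ∈ (↑P : Set Pt) := ha
  have hb' : b ∈ (↑P : Set Pt) := hb
  have hc' : c ∈ (↑P : Set Pt) := hc
  have hs' : s ∉ (↑P : Set Pt) := hs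
  have hsa : s ≠ a := fun h => hs (h ▸ ha)
  have hsb : s ≠ b := fun h => hs (h ▸ hb)
  have hsc : s ≠ c := fun h => hs (h ▸ hc)
  set K : Set (Sym2 Pt) := {eab, ebc, eac} with hKdef
  set Es : Set (Sym2 Pt) := {s(s, a), s(s, b), s(s, c)} with hEsdef
  set G := SimpleGraph.fromEdgeSet ((T.edgeSet \ K) ∪ Es) with hGdef
  have hEs_s : ∀ f ∈ Es, ∃ t : Pt, f = s(s, t) := by
    intro f hf
    rw [hEsdef] at hf
    simp only [Set.mem_insert_iff, Set.mem_singleton_iff] at hf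
    rcases hf with rfl | rfl | rfl
    exacts [⟨a, rfl⟩, ⟨b, rfl⟩, ⟨c, rfl⟩]
  have hadjS : ∀ t : Pt, G.Adj s t → t = a ∨ t = b ∨ t = c := by
    intro t ht
    rw [hGdef, SimpleGraph.fromEdgeSet_adj] at ht
    rcases ht.1 with h | h
    · exact absurd (hedge ((SimpleGraph.mem_edgeSet (G := T)).mp h.1)).1 hs'
    · rw [hEsdef] at h
      simp only [Set.mem_insert_iff, Set.mem_singleton_iff, Sym2.eq_iff] at h
      rcases h with (⟨-, rfl⟩ | ⟨h1, -⟩) | (⟨-, rfl⟩ | ⟨h1, -⟩) | (⟨-, rfl⟩ | ⟨h1, -⟩)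
      · exact Or.inl rfl
      · exact absurd h1 hsa
      · exact Or.inr (Or.inl rfl)
      · exact absurd h1 hsb
      · exact Or.inr (Or.inr rfl)
      · exact absurd h1 hsc
  have hwalk_edges : ∀ {u v : Pt} (r : G.Walk u v), s ∉ r.support →
      ∀ f ∈ r.edges, f ∈ T.edgeSet ∧ f ∉ K := by
    intro u v r hsup f hf
    have hfG : f ∈ G.edgeSet := r.edges_subset_edgeSet hf
    rw [hGdef, SimpleGraph.edgeSet_fromEdgeSet] at hfG
    rcases hfG.1 with h | h
    · exact ⟨h.1, h.2⟩
    · exfalso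
      obtain ⟨t, rfl⟩ := hEs_s f h
      exact hsup (r.fst_mem_support_of_mem_edges hf)
  have hbn : ∀ p q : Pt, (p = a ∨ p = b ∨ p = c) → (q = a ∨ q = b ∨ q = c) → p ≠ q →
      ∃ e ∈ K, BottleneckEdge T p q e := by
    rintro p q (rfl | rfl | rfl) (rfl | rfl | rfl) hne
    · exact absurd rfl hne
    · exact ⟨eab, by rw [hKdef]; simp, heab⟩
    · exact ⟨eac, by rw [hKdef]; simp, heac⟩
    · exact ⟨eab, by rw [hKdef]; simp, heab.symm2⟩
    · exact absurd rfl hne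
    · exact ⟨ebc, by rw [hKdef]; simp, hebc⟩
    · exact ⟨eac, by rw [hKdef]; simp, heac.symm2⟩
    · exact ⟨ebc, by rw [hKdef]; simp, hebc.symm2⟩
    · exact absurd rfl hne
  refine ⟨?_, ?_, ?_⟩
  · -- edges stay inside `insert s P`
    intro x y hxy
    rw [hGdef, SimpleGraph.fromEdgeSet_adj] at hxy
    rcases hxy.1 with h | h
    · have h2 := hedge ((SimpleGraph.mem_edgeSet (G := T)).mp h.1)
      exact ⟨Set.mem_insert_of_mem _ h2.1, Set.mem_insert_of_mem _ h2.2⟩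
    · rw [hEsdef] at h
      simp only [Set.mem_insert_iff, Set.mem_singleton_iff, Sym2.eq_iff] at h
      rcases h with (⟨rfl, rfl⟩ | ⟨rfl, rfl⟩) | (⟨rfl, rfl⟩ | ⟨rfl, rfl⟩) |
        (⟨rfl, rfl⟩ | ⟨rfl, rfl⟩) <;>
      simp [ha, hb, hc]
  · -- acyclicity
    intro v cw hcw
    by_cases hsv : s ∈ cw.support
    · have hc'cyc : (cw.rotate s hsv).IsCycle := hcw.rotate hsv
      have hlen : 3 ≤ (cw.rotate s hsv).length := hc'cyc.three_le_length
      have hnn : ¬ (cw.rotate s hsv).Nil := by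
        rw [SimpleGraph.Walk.nil_iff_length_eq]; omega
      obtain ⟨x, hadj, q, hq⟩ := SimpleGraph.Walk.not_nil_iff.mp hnn
      rw [hq] at hc'cyc hlen
      obtain ⟨hqpath, hqe⟩ := (SimpleGraph.Walk.cons_isCycle_iff _ _).mp hc'cyc
      have hqrnn : ¬ q.reverse.Nil := by
        rw [SimpleGraph.Walk.nil_iff_length_eq, SimpleGraph.Walk.length_reverse]
        rw [SimpleGraph.Walk.length_cons] at hlen
        omega
      obtain ⟨y, hadj2, r, hr⟩ := SimpleGraph.Walk.not_nil_iff.mp hqrnn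
      have hqrev : q.reverse.IsPath := hqpath.reverse
      rw [hr, SimpleGraph.Walk.cons_isPath_iff] at hqrev
      obtain ⟨hrpath, hsr⟩ := hqrev
      have hxy : y ≠ x := by
        rintro rfl
        have hrnil : r = SimpleGraph.Walk.nil := (SimpleGraph.Walk.isPath_iff_eq_nil (p := r)).mp hrpath
        rw [hrnil] at hr
        have hq1 : q.length = 1 := by
          have hlr := congrArg SimpleGraph.Walk.length hr
          rw [SimpleGraph.Walk.length_reverse] at hlr
          simpa using hlr
        rw [SimpleGraph.Walk.length_cons, hq1] at hlen
        omega
      obtain ⟨e, heK, hbne⟩ := hbn y x (hadjS y hadj2) (hadjS x hadj) hxy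
      have hre := hwalk_edges r hsr
      have hmem := (hbne.2 (r.transfer T (fun f hf => (hre f hf).1)).bypass
        (r.transfer T (fun f hf => (hre f hf).1)).bypass_isPath).1
      have her : e ∈ r.edges := by
        have h2 := SimpleGraph.Walk.edges_bypass_subset _ hmem
        rwa [SimpleGraph.Walk.edges_transfer] at h2
      exact (hre e her).2 heK
    · have hce := hwalk_edges cw hsv
      exact hacyc _ (hcw.transfer (fun f hf => (hce f hf).1))
  · -- connectivity
    have key : ∀ w ∈ (↑P : Set Pt), G.Reachable w s := by
      have hmain : ∃ (x y z : Pt) (f1 f2 : Sym2 Pt),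
          x ∈ (↑P : Set Pt) ∧ y ∈ (↑P : Set Pt) ∧ z ∈ (↑P : Set Pt) ∧
          BottleneckEdge T x y f1 ∧ BottleneckEdge T x z f1 ∧ BottleneckEdge T y z f2 ∧
          K = {f1, f2} ∧ s(s, x) ∈ Es ∧ s(s, y) ∈ Es ∧ s(s, z) ∈ Es := by
        have hmEa : s(s, a) ∈ Es := by rw [hEsdef]; simp
        have hmEb : s(s, b) ∈ Es := by rw [hEsdef]; simp
        have hmEc : s(s, c) ∈ Es := by rw [hEsdef]; simp
        rcases le_total (edgeLen eac) (edgeLen eab) with hA | hA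
        · rcases le_total (edgeLen ebc) (edgeLen eab) with hB | hB
          · -- eab is the longest
            rcases apex hconn hdist ha' hb' hc' heab hebc heac hA hB with hEq | hEq
            · have hKeq : K = {eab, ebc} := by
                rw [hKdef]; ext e
                simp only [Set.mem_insert_iff, Set.mem_singleton_iff, hEq]; tauto
              have h1' : BottleneckEdge T a c eab := by rw [hEq]; exact heac
              exact ⟨a, b, c, eab, ebc, ha', hb', hc', heab, h1', hebc, hKeq, hmEa, hmEb, hmEc⟩
            · have hKeq : K = {eab, eac} := by
                rw [hKdef]; ext e
                simp only [Set.mem_insert_iff, Set.mem_singleton_iff, hEq]; tauto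
              have h1' : BottleneckEdge T b c eab := by rw [hEq]; exact hebc
              exact ⟨b, a, c, eab, eac, hb', ha', hc', heab.symm2, h1', heac, hKeq, hmEb, hmEa, hmEc⟩
          · -- ebc is the longest
            rcases apex hconn hdist hb' hc' ha' hebc heac.symm2 heab.symm2
                hB (hA.trans hB) with hEq | hEq
            · have hKeq : K = {ebc, eac} := by
                rw [hKdef]; ext e
                simp only [Set.mem_insert_iff, Set.mem_singleton_iff, hEq]; tauto
              have h1 : BottleneckEdge T b a ebc := by rw [hEq]; exact heab.symm2
              exact ⟨b, a, c, ebc, eac, hb', ha', hc', h1, hebc, heac, hKeq, hmEb, hmEa, hmEc⟩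
            · have hKeq : K = {ebc, eab} := by
                rw [hKdef]; ext e
                simp only [Set.mem_insert_iff, Set.mem_singleton_iff, hEq]; tauto
              have h1' : BottleneckEdge T c a ebc := by rw [hEq]; exact heac.symm2
              exact ⟨c, b, a, ebc, eab, hc', hb', ha', hebc.symm2, h1', heab.symm2, hKeq,
                hmEc, hmEb, hmEa⟩
        · rcases le_total (edgeLen ebc) (edgeLen eac) with hB | hB
          · -- eac is the longest
            rcases apex hconn hdist ha' hc' hb' heac hebc.symm2 heab hA hB with hEq | hEq
            · have hKeq : K = {eac, ebc} := by
                rw [hKdef]; ext e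
                simp only [Set.mem_insert_iff, Set.mem_singleton_iff, hEq]; tauto
              have h1 : BottleneckEdge T a b eac := by rw [hEq]; exact heab
              exact ⟨a, b, c, eac, ebc, ha', hb', hc', h1, heac, hebc, hKeq, hmEa, hmEb, hmEc⟩
            · have hKeq : K = {eac, eab} := by
                rw [hKdef]; ext e
                simp only [Set.mem_insert_iff, Set.mem_singleton_iff, hEq]; tauto
              have h1' : BottleneckEdge T c b eac := by rw [hEq]; exact hebc.symm2
              exact ⟨c, a, b, eac, eab, hc', ha', hb', heac.symm2, h1', heab, hKeq,
                hmEc, hmEa, hmEb⟩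
          · -- ebc is the longest
            rcases apex hconn hdist hb' hc' ha' hebc heac.symm2 heab.symm2
                (hA.trans hB) hB with hEq | hEq
            · have hKeq : K = {ebc, eac} := by
                rw [hKdef]; ext e
                simp only [Set.mem_insert_iff, Set.mem_singleton_iff, hEq]; tauto
              have h1 : BottleneckEdge T b a ebc := by rw [hEq]; exact heab.symm2
              exact ⟨b, a, c, ebc, eac, hb', ha', hc', h1, hebc, heac, hKeq, hmEb, hmEa, hmEc⟩
            · have hKeq : K = {ebc, eab} := by
                rw [hKdef]; ext e
                simp only [Set.mem_insert_iff, Set.mem_singleton_iff, hEq]; tauto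
              have h1' : BottleneckEdge T c a ebc := by rw [hEq]; exact heac.symm2
              exact ⟨c, b, a, ebc, eab, hc', hb', ha', hebc.symm2, h1', heab.symm2, hKeq,
                hmEc, hmEb, hmEa⟩
      obtain ⟨x, y, z, f1, f2, hx, hy, hz, h1, h1', h2, hKe, hEx, hEy, hEz⟩ := hmain
      rw [hGdef]
      exact conn_helper hedge hacyc hconn hdist hs' hx hy hz h1 h1' h2 hKe hEx hEy hEz
    intro u hu v hv
    have h1 : G.Reachable u s := by
      rcases Set.mem_insert_iff.mp hu with rfl | h
      · exact SimpleGraph.Reachable.refl u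
      · exact key u h
    have h2 : G.Reachable v s := by
      rcases Set.mem_insert_iff.mp hv with rfl | h
      · exact SimpleGraph.Reachable.refl v
      · exact key v h
    exact h1.trans h2.symm

end
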